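/- Fix an adjacentable sequence a and pairwise disjoint, pairwise non-semi-overlapping h-ordered sequences d_1,...,d_p. If x ∈ a ∩ d_m and y ∈ a ∩ d_j with m ≠ j and h(x) < h(y), then (x,y) ∈ C_P; consequently, for each pair j ≠ m, either all elements of a ∩ d_m precede all elements of a ∩ d_j in a, or vice versa. -/

import Mathlib

variable {α : Type*}

/-- `asc(S)`: one plus the number of consecutive ascents (in the partial order),
`0` for the empty sequence. -/
noncomputable def ascCount [Preorder α] (l : List α) : ℕ :=
  if l.isEmpty then 0 else 1 + Nat.card {p : α × α // p ∈ l.zip l.tail ∧ p.1 < p.2}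

/-- `desc(S)`: the length of the longest subsequence in which no earlier element
is strictly below a later one. -/
noncomputable def descCount [Preorder α] (l : List α) : ℕ :=
  sSup {m | ∃ t : List α, t.Sublist l ∧ t.Pairwise (fun a b => ¬ a < b) ∧ t.length = m}

/-- A sequence of distinct elements is adjacentable if every consecutive pair lies in `C`. -/
def IsAdjacentable (C : α → α → Prop) (l : List α) : Prop :=
  l.Nodup ∧ l.Chain' C

/-- A sequence of distinct elements is `h`-ordered if `h` strictly increases along it. -/
def IsHOrdered {n : ℕ} (h : α ≃ Fin n) (l : List α) : Prop :=
  l.Nodup ∧ l.Chain' (fun a b => h a < h b)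

/-- Two sequences are semi-overlapping if each contains an element `C`-below an
element of the other. -/
def SemiOverlapping (C : α → α → Prop) (s t : List α) : Prop :=
  (∃ x ∈ s, ∃ y ∈ t, C y x) ∧ (∃ x ∈ s, ∃ y ∈ t, C x y)

/-- A family of pairwise disjoint sequences. -/
def FamilyDisjoint {k : ℕ} (S : Fin k → List α) : Prop :=
  ∀ i j, i ≠ j → ∀ x, x ∈ S i → x ∉ S j

/-- `A'_k`: the maximum of `asc(S₁) + ⋯ + asc(S_k)` over `k` pairwise disjoint
adjacentable sequences. -/
noncomputable def Aval [Preorder α] (C : α → α → Prop) (k : ℕ) : ℕ :=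
  sSup {m | ∃ S : Fin k → List α, (∀ i, IsAdjacentable C (S i)) ∧ FamilyDisjoint S ∧
    m = ∑ i, ascCount (S i)}

/-- `D'_k`: the maximum of `desc(S₁) + ⋯ + desc(S_k)` over `k` pairwise disjoint,
pairwise non-semi-overlapping `h`-ordered sequences. -/
noncomputable def Dval [Preorder α] {n : ℕ} (h : α ≃ Fin n) (C : α → α → Prop) (k : ℕ) : ℕ :=
  sSup {m | ∃ S : Fin k → List α, (∀ i, IsHOrdered h (S i)) ∧ FamilyDisjoint S ∧
    (∀ i j, i ≠ j → ¬ SemiOverlapping C (S i) (S j)) ∧ m = ∑ i, descCount (S i)}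

/-- `f` (with `f k` playing the role of `λ_{k+1}`) is a partition of `n`. -/
def IsPartitionOf (n : ℕ) (f : ℕ → ℕ) : Prop :=
  (∀ k, f (k + 1) ≤ f k) ∧ ∃ N, (∑ k ∈ Finset.range N, f k = n) ∧ ∀ k, N ≤ k → f k = 0

/-- `f` and `g` are conjugate partitions of `n` (indexed from `0`, so `f k = λ_{k+1}`):
`μ_j = #{i : λ_i ≥ j}`. -/
def ConjugatePartitions (n : ℕ) (f g : ℕ → ℕ) : Prop :=
  IsPartitionOf n f ∧ IsPartitionOf n g ∧ ∀ j, g j = Nat.card {i : ℕ | j + 1 ≤ f i}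

lemma pairwise_of_indexOf_lt [DecidableEq α] {R : α → α → Prop} {l : List α}
    (hp : l.Pairwise R) {x y : α} (hx : x ∈ l) (hy : y ∈ l)
    (hlt : l.idxOf x < l.idxOf y) : R x y := by
  rw [List.pairwise_iff_get] at hp
  have hxl : l.idxOf x < l.length := List.idxOf_lt_length_iff.2 hx
  have hyl : l.idxOf y < l.length := List.idxOf_lt_length_iff.2 hy
  have := hp ⟨l.idxOf x, hxl⟩ ⟨l.idxOf y, hyl⟩ hlt
  simpa [List.get_eq_getElem, List.getElem_idxOf] using this

/-- If `x ∈ a ∩ d_m`, `y ∈ a ∩ d_j` with `m ≠ j` and `h x < h y`, then `(x,y) ∈ C_P`;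
consequently the elements of `a ∩ d_m` and `a ∩ d_j` do not interleave inside `a`. -/
theorem intersection_blocks [PartialOrder α] [DecidableEq α] {n : ℕ} (h : α ≃ Fin n)
    (C : α → α → Prop) (hCtrans : Transitive C)
    (hC1 : ∀ x y : α, x < y → h x < h y → C x y)
    (hC2 : ∀ x y : α, C x y → h x < h y)
    {p : ℕ} (a : List α) (d : Fin p → List α)
    (ha : IsAdjacentable C a)
    (hd : ∀ j, IsHOrdered h (d j))
    (hddisj : FamilyDisjoint d)
    (hdso : ∀ j j', j ≠ j' → ¬ SemiOverlapping C (d j) (d j')) :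
    (∀ (m j : Fin p) (x y : α), m ≠ j → x ∈ a → x ∈ d m → y ∈ a → y ∈ d j →
        h x < h y → C x y) ∧
      (∀ m j : Fin p, m ≠ j →
        (∀ x ∈ a, x ∈ d m → ∀ y ∈ a, y ∈ d j → a.idxOf x < a.idxOf y) ∨
        (∀ x ∈ a, x ∈ d m → ∀ y ∈ a, y ∈ d j → a.idxOf y < a.idxOf x)) := by
  obtain ⟨hanodup, hachain⟩ := ha
  -- a is pairwise C
  have hpair : a.Pairwise C := by
    haveI : IsTrans α C := ⟨fun _ _ _ h1 h2 => hCtrans h1 h2⟩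
    exact List.isChain_iff_pairwise.mp hachain
  -- key: elements of a in C according to index order
  have key : ∀ x ∈ a, ∀ y ∈ a, a.idxOf x < a.idxOf y → C x y := by
    intro x hx y hy hlt
    exact pairwise_of_indexOf_lt hpair hx hy hlt
  have idx_ne : ∀ x ∈ a, ∀ y ∈ a, x ≠ y → a.idxOf x ≠ a.idxOf y := by
    intro x hx y hy hne heq
    apply hne
    have hxl : a.idxOf x < a.length := List.idxOf_lt_length_iff.2 hx
    have h1 : a[a.idxOf x] = x := List.getElem_idxOf hxl
    have h2 : a[a.idxOf y]'(List.idxOf_lt_length_iff.2 hy) = y := List.getElem_idxOf _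
    rw [← h1, ← h2]
    congr 1
  have first : ∀ (m j : Fin p) (x y : α), m ≠ j → x ∈ a → x ∈ d m → y ∈ a → y ∈ d j →
      h x < h y → C x y := by
    intro m j x y hmj hxa hxd hya hyd hhxy
    have hne : x ≠ y := fun he => (lt_irrefl _ (he ▸ hhxy))
    rcases lt_or_gt_of_ne (idx_ne x hxa y hya hne) with hlt | hgt
    · exact key x hxa y hya hlt
    · exact absurd (hC2 _ _ (key y hya x hxa hgt)) (by omega)
  refine ⟨first, ?_⟩
  intro m j hmj
  by_contra hcon
  push_neg at hcon
  obtain ⟨⟨x, hxa, hxd, y, hya, hyd, hxy⟩, ⟨x', hx'a, hx'd, y', hy'a, hy'd, hx'y'⟩⟩ := hcon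
  -- x,x' ∈ d m, y,y' ∈ d j; indexOf y ≤ indexOf x and indexOf x' ≤ indexOf y'
  have hnexy : x ≠ y := fun he => hddisj m j hmj x hxd (he ▸ hyd)
  have hnex'y' : x' ≠ y' := fun he => hddisj m j hmj x' hx'd (he ▸ hy'd)
  have h1 : C y x := key y hya x hxa (lt_of_le_of_ne hxy (idx_ne y hya x hxa hnexy.symm))
  have h2 : C x' y' := key x' hx'a y' hy'a
    (lt_of_le_of_ne hx'y' (idx_ne x' hx'a y' hy'a hnex'y'))
  exact hdso m j hmj ⟨⟨x, hxd, y, hyd, h1⟩, ⟨x', hx'd, y', hy'd, h2⟩⟩
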